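/- arXiv:1111.4635 — 2 statements merged into one kernel-verified Lean document; each statement's English description precedes it below -/
import Mathlib

section
/- A 1-Lipschitz map f : ℤ₂ → ℤ₂ is bijective if and only if there exist c ∈ {0, 1} and a 1-Lipschitz map g : ℤ₂ → ℤ₂ such that f(x) = c + x + 2·g(x) for all x ∈ ℤ₂. -/
open Function Finset

/-- `a ≡ b (mod 2^s)` in the 2-adic integers. -/
def CongMod (s : ℕ) (a b : ℤ_[2]) : Prop := ‖a - b‖ ≤ ((2 : ℝ) ^ s)⁻¹

/-- `f` is 1-Lipschitz for the 2-adic norm (a T-function). -/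
def OneLip (f : ℤ_[2] → ℤ_[2]) : Prop := ∀ a b : ℤ_[2], ‖f a - f b‖ ≤ ‖a - b‖

/-- `f` is transitive modulo `2^n`. -/
def TransMod (f : ℤ_[2] → ℤ_[2]) (n : ℕ) : Prop :=
  ∀ x y : ℤ_[2], ∃ i < 2 ^ n, CongMod n (f^[i] x) y

/-- `f` is transitive (single cycle modulo every power of 2). -/
def TransitiveT (f : ℤ_[2] → ℤ_[2]) : Prop := ∀ n : ℕ, 1 ≤ n → TransMod f n

/-- `f` is bijective modulo `2^n`. -/
def BijMod (f : ℤ_[2] → ℤ_[2]) (n : ℕ) : Prop :=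
  (∀ a b : ℤ_[2], CongMod n (f a) (f b) → CongMod n a b) ∧
  (∀ y : ℤ_[2], ∃ x : ℤ_[2], CongMod n (f x) y)

/-- `f` is bijective (measure-preserving T-function). -/
def BijectiveT (f : ℤ_[2] → ℤ_[2]) : Prop := ∀ n : ℕ, 1 ≤ n → BijMod f n

/-- `g` is a derivative of `f` modulo `2^M` with parameter `K`. -/
def IsDerivMod (f g : ℤ_[2] → ℤ_[2]) (M K : ℕ) : Prop :=
  ∀ x h : ℤ_[2], ‖h‖ ≤ ((2 : ℝ) ^ K)⁻¹ →
    ‖f (x + h) - f x - g x * h‖ ≤ ((2 : ℝ) ^ M)⁻¹ * ‖h‖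

/-- The `n`-th binary digit of a 2-adic integer, as an element of `ZMod 2`.
`PadicInt.appr x n` is the unique integer in `{0, …, 2^n - 1}` congruent to `x` mod `2^n`. -/
noncomputable def delta (n : ℕ) (x : ℤ_[2]) : ZMod 2 :=
  (((x.appr (n + 1) - x.appr n) / 2 ^ n : ℕ) : ZMod 2)

lemma pow_inv_eq (s : ℕ) : ((2 : ℝ) ^ s)⁻¹ = ((2:ℕ) : ℝ) ^ (-s : ℤ) := by
  push_cast
  rw [zpow_neg, zpow_natCast]

lemma congMod_iff {s : ℕ} {a b : ℤ_[2]} :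
    CongMod s a b ↔ PadicInt.toZModPow s a = PadicInt.toZModPow s b := by
  unfold CongMod
  rw [pow_inv_eq, PadicInt.norm_le_pow_iff_mem_span_pow, ← PadicInt.ker_toZModPow,
    RingHom.mem_ker, map_sub, sub_eq_zero]

lemma zmod2_eq_one {x : ZMod 2} (h : x ≠ 0) : x = 1 := by revert x; decide

lemma norm_le_half_of_lt_one {x : ℤ_[2]} (h : ‖x‖ < 1) : ‖x‖ ≤ 2⁻¹ := by
  have := (PadicInt.norm_lt_pow_iff_norm_le_pow_sub_one x 0).mp (by simpa using h)
  simpa using this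

lemma units_close {u v : ℤ_[2]} (hu : ‖u‖ = 1) (hv : ‖v‖ = 1) : ‖u - v‖ ≤ 2⁻¹ := by
  have key : ∀ w : ℤ_[2], ‖w‖ = 1 → PadicInt.toZMod w = 1 := by
    intro w hw
    apply zmod2_eq_one
    intro h0
    have : w ∈ RingHom.ker (PadicInt.toZMod (p := 2)) := by rwa [RingHom.mem_ker]
    rw [PadicInt.ker_toZMod, IsLocalRing.mem_maximalIdeal, PadicInt.mem_nonunits] at this
    simp [hw] at this
  apply norm_le_half_of_lt_one
  have : u - v ∈ RingHom.ker (PadicInt.toZMod (p := 2)) := by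
    rw [RingHom.mem_ker, map_sub, key u hu, key v hv, sub_self]
  rw [PadicInt.ker_toZMod, IsLocalRing.mem_maximalIdeal, PadicInt.mem_nonunits] at this
  exact this

lemma close_of_norm_eq {x y : ℤ_[2]} (h : ‖x‖ = ‖y‖) : ‖x - y‖ ≤ 2⁻¹ * ‖x‖ := by
  by_cases hx : x = 0
  · have hy : y = 0 := by rwa [hx, norm_zero, eq_comm, norm_eq_zero] at h
    simp [hx, hy]
  · have hy : y ≠ 0 := by
      intro h0; rw [h0, norm_zero, norm_eq_zero] at h; exact hx h
    have hval : y.valuation = x.valuation := by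
      rw [PadicInt.norm_eq_zpow_neg_valuation hx, PadicInt.norm_eq_zpow_neg_valuation hy] at h
      have h2 := zpow_right_injective₀ (a := ((2:ℕ):ℝ)) (by norm_num) (by norm_num) h
      omega
    have hxs := PadicInt.unitCoeff_spec hx
    have hys := PadicInt.unitCoeff_spec hy
    rw [hval] at hys
    set k := x.valuation
    set u := (PadicInt.unitCoeff hx : ℤ_[2])
    set v := (PadicInt.unitCoeff hy : ℤ_[2])
    have hxy : x - y = (u - v) * (2:ℤ_[2]) ^ k := by
      rw [hxs, hys]; push_cast; ring
    have hnx : ‖x‖ = ‖((2:ℕ):ℤ_[2]) ^ k‖ := by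
      rw [hxs, norm_mul, PadicInt.norm_units, one_mul]
    rw [hxy, norm_mul, hnx]
    have huv : ‖u - v‖ ≤ 2⁻¹ := units_close (PadicInt.norm_units _) (PadicInt.norm_units _)
    have : ((2:ℕ):ℤ_[2]) ^ k = (2:ℤ_[2]) ^ k := by push_cast; ring
    rw [← this]
    exact mul_le_mul_of_nonneg_right huv (norm_nonneg _)

lemma isom_of_bij {f : ℤ_[2] → ℤ_[2]} (hf : OneLip f) (hb : BijectiveT f) :
    ∀ a b : ℤ_[2], ‖f a - f b‖ = ‖a - b‖ := by
  intro a b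
  by_cases hab : a = b
  · simp [hab]
  have hd : a - b ≠ 0 := sub_ne_zero.mpr hab
  set k := (a - b).valuation with hk
  have hkval : ((k : ℤ)) = (a - b).valuation := rfl
  have hnab : ‖a - b‖ = ((2:ℕ):ℝ) ^ (-(k:ℤ)) := by
    rw [PadicInt.norm_eq_zpow_neg_valuation hd]
  -- not congruent mod 2^(k+1)
  have hnc : ¬ CongMod (k+1) (f a) (f b) := by
    intro hc
    have h2 : CongMod (k+1) a b := (hb (k+1) (by omega)).1 a b hc
    unfold CongMod at h2
    rw [pow_inv_eq, PadicInt.norm_le_pow_iff_le_valuation _ hd] at h2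
    omega
  have hne : f a - f b ≠ 0 := by
    intro h0
    exact hnc (by unfold CongMod; rw [h0, norm_zero]; positivity)
  have hle : ‖f a - f b‖ ≤ ‖a - b‖ := hf a b
  have h1 : (k : ℤ) ≤ (f a - f b).valuation := by
    have := (PadicInt.norm_le_pow_iff_le_valuation _ hne k).mp (by rw [hnab] at hle; exact_mod_cast hle)
    exact_mod_cast this
  have h2 : ¬ (((k:ℤ) + 1) ≤ (f a - f b).valuation) := by
    intro hcon
    apply hnc
    unfold CongMod
    rw [pow_inv_eq]
    rw [PadicInt.norm_le_pow_iff_le_valuation _ hne (n := k + 1)]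
    push_cast
    omega
  have hveq : (f a - f b).valuation = (k : ℤ) := by omega
  rw [PadicInt.norm_eq_zpow_neg_valuation hne, hveq, hnab]

lemma key_est {f : ℤ_[2] → ℤ_[2]} (hf : OneLip f) (hb : BijectiveT f) (a b : ℤ_[2]) :
    ‖(f a - f b) - (a - b)‖ ≤ 2⁻¹ * ‖a - b‖ := by
  have h := close_of_norm_eq (x := f a - f b) (y := a - b) (isom_of_bij hf hb a b)
  rwa [isom_of_bij hf hb a b] at h

/-- Explicit form of bijective T-functions: `f(x) = c + x + 2 g(x)` with `c ∈ {0,1}`. -/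
theorem bijective_explicit_form (f : ℤ_[2] → ℤ_[2]) (hf : OneLip f) :
    BijectiveT f ↔
      ∃ c : ℤ_[2], (c = 0 ∨ c = 1) ∧ ∃ g : ℤ_[2] → ℤ_[2], OneLip g ∧
        ∀ x : ℤ_[2], f x = c + x + 2 * g x := by
  constructor
  · intro hb
    obtain ⟨c, hc01, hc⟩ : ∃ c : ℤ_[2], (c = 0 ∨ c = 1) ∧ ‖f 0 - c‖ ≤ 2⁻¹ := by
      by_cases h0 : ‖f 0‖ < 1
      · exact ⟨0, Or.inl rfl, by simpa using norm_le_half_of_lt_one h0⟩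
      · have h1 : ‖f 0‖ = 1 := le_antisymm (PadicInt.norm_le_one _) (not_lt.mp h0)
        exact ⟨1, Or.inr rfl, units_close h1 (by simp)⟩
    have hdvd : ∀ x : ℤ_[2], ∃ t : ℤ_[2], f x - x - c = 2 * t := by
      intro x
      have h1 : ‖(f x - f 0) - (x - 0)‖ ≤ 2⁻¹ := by
        refine le_trans (key_est hf hb x 0) ?_
        calc 2⁻¹ * ‖x - (0:ℤ_[2])‖ ≤ 2⁻¹ * 1 := by
              gcongr; exact PadicInt.norm_le_one _
          _ = 2⁻¹ := mul_one _
      have h2 : ‖f x - x - c‖ < 1 := by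
        have : f x - x - c = ((f x - f 0) - (x - 0)) + (f 0 - c) := by ring
        rw [this]
        calc ‖((f x - f 0) - (x - 0)) + (f 0 - c)‖
            ≤ max ‖(f x - f 0) - (x - 0)‖ ‖f 0 - c‖ := PadicInt.nonarchimedean _ _
          _ ≤ 2⁻¹ := max_le h1 hc
          _ < 1 := by norm_num
      have := (PadicInt.norm_lt_one_iff_dvd _).mp h2
      obtain ⟨t, ht⟩ := this
      exact ⟨t, by rw [ht]; push_cast; ring⟩
    refine ⟨c, hc01, fun x => (hdvd x).choose, ?_, ?_⟩
    · intro a b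
      have hab : (2:ℤ_[2]) * ((hdvd a).choose - (hdvd b).choose) = (f a - f b) - (a - b) := by
        have h1 := (hdvd a).choose_spec
        have h2 := (hdvd b).choose_spec
        linear_combination h2 - h1
      have hn : ‖(2:ℤ_[2]) * ((hdvd a).choose - (hdvd b).choose)‖
          = 2⁻¹ * ‖(hdvd a).choose - (hdvd b).choose‖ := by
        rw [norm_mul]
        congr 1
        have : ((2:ℕ):ℤ_[2]) = (2:ℤ_[2]) := by push_cast; ring
        rw [← this, PadicInt.norm_p]
        norm_num
      have := key_est hf hb a b
      rw [← hab, hn] at this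
      have h2 : (0:ℝ) < 2⁻¹ := by norm_num
      exact le_of_mul_le_mul_left this h2
    · intro x
      have := (hdvd x).choose_spec
      linear_combination this
  · rintro ⟨c, hc01, g, hg, heq⟩
    have hiso : ∀ a b : ℤ_[2], ‖f a - f b‖ = ‖a - b‖ := by
      intro a b
      by_cases hab : a = b
      · simp [hab]
      have h : f a - f b = (a - b) + 2 * (g a - g b) := by
        rw [heq a, heq b]; ring
      have hpos : (0:ℝ) < ‖a - b‖ := by
        simpa [norm_pos_iff, sub_ne_zero] using hab
      have hlt : ‖(2:ℤ_[2]) * (g a - g b)‖ < ‖a - b‖ := by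
        rw [norm_mul]
        have h2 : ‖(2:ℤ_[2])‖ = 2⁻¹ := by
          have : ((2:ℕ):ℤ_[2]) = (2:ℤ_[2]) := by push_cast; ring
          rw [← this, PadicInt.norm_p]; norm_num
        rw [h2]
        calc 2⁻¹ * ‖g a - g b‖ ≤ 2⁻¹ * ‖a - b‖ := by gcongr; exact hg a b
          _ < 1 * ‖a - b‖ := by apply mul_lt_mul_of_pos_right (by norm_num) hpos
          _ = ‖a - b‖ := one_mul _
      rw [h, PadicInt.norm_add_eq_max_of_ne hlt.ne']
      exact max_eq_left hlt.le
    intro n hn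
    constructor
    · intro a b hcong
      unfold CongMod at *
      rwa [hiso a b] at hcong
    · intro y
      haveI : NeZero (2^n) := ⟨pow_ne_zero _ two_ne_zero⟩
      set F : ZMod (2^n) → ZMod (2^n) :=
        fun z => PadicInt.toZModPow n (f ((z.val : ℕ) : ℤ_[2])) with hF
      have hFinj : Function.Injective F := by
        intro z w h
        have h1 : CongMod n (f ((z.val : ℕ) : ℤ_[2])) (f ((w.val : ℕ) : ℤ_[2])) :=
          congMod_iff.mpr h
        have h2 : CongMod n ((z.val : ℕ) : ℤ_[2]) ((w.val : ℕ) : ℤ_[2]) := by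
          unfold CongMod at *
          rwa [hiso] at h1
        have h3 := congMod_iff.mp h2
        rwa [map_natCast, map_natCast, ZMod.natCast_zmod_val, ZMod.natCast_zmod_val] at h3
      have hFsurj : Function.Surjective F := Finite.injective_iff_surjective.mp hFinj
      obtain ⟨z, hz⟩ := hFsurj (PadicInt.toZModPow n y)
      exact ⟨((z.val : ℕ) : ℤ_[2]), congMod_iff.mpr hz⟩
end

section
/- A 1-Lipschitz map f : ℤ₂ → ℤ₂ is transitive if and only if there exists a 1-Lipschitz map g : ℤ₂ → ℤ₂ such that f(x) = 1 + x + 2·(g(x+1) − g(x)) for all x ∈ ℤ₂. -/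
open Function Finset

lemma N_eq (n : ℕ) : ((2:ℝ)^n)⁻¹ = (2:ℝ)^(-(n:ℤ)) := by
  rw [zpow_neg, zpow_natCast]

lemma norm_le_N_iff_dvd (z : ℤ_[2]) (n : ℕ) :
    ‖z‖ ≤ ((2:ℝ)^n)⁻¹ ↔ (2:ℤ_[2])^n ∣ z := by
  rw [N_eq]
  have := PadicInt.norm_le_pow_iff_mem_span_pow z n (p := 2)
  rw [Ideal.mem_span_singleton] at this
  exact_mod_cast this

lemma two_dvd_or (w : ℤ_[2]) : (2:ℤ_[2]) ∣ w ∨ (2:ℤ_[2]) ∣ (w - 1) := by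
  have h := PadicInt.appr_spec 1 w
  rw [Ideal.mem_span_singleton] at h
  have hlt := PadicInt.appr_lt w 1
  norm_num at hlt
  interval_cases h' : w.appr 1
  · left; simpa using h
  · right; simpa using h

/-- dichotomy: z ≡ 0 or 2^n  mod 2^(n+1) -/
lemma dichot (z : ℤ_[2]) (n : ℕ) (hz : ‖z‖ ≤ ((2:ℝ)^n)⁻¹) :
    ‖z‖ ≤ ((2:ℝ)^(n+1))⁻¹ ∨ ‖z - 2^n‖ ≤ ((2:ℝ)^(n+1))⁻¹ := by
  rw [norm_le_N_iff_dvd] at hz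
  obtain ⟨w, rfl⟩ := hz
  rcases two_dvd_or w with ⟨v, rfl⟩ | ⟨v, hv⟩
  · left; rw [norm_le_N_iff_dvd]
    exact ⟨v, by ring⟩
  · right; rw [norm_le_N_iff_dvd]
    refine ⟨v, ?_⟩
    have : w = 1 + 2*v := by linear_combination hv
    rw [this]; ring

lemma Npos (n : ℕ) : (0:ℝ) < ((2:ℝ)^n)⁻¹ := by positivity

lemma umax {a b : ℤ_[2]} {c : ℝ} (ha : ‖a‖ ≤ c) (hb : ‖b‖ ≤ c) : ‖a + b‖ ≤ c :=
  (PadicInt.nonarchimedean a b).trans (max_le ha hb)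

lemma umax' {a b : ℤ_[2]} {c : ℝ} (ha : ‖a‖ ≤ c) (hb : ‖b‖ ≤ c) : ‖a - b‖ ≤ c := by
  rw [sub_eq_add_neg]; exact umax ha (by rwa [norm_neg])

lemma usum {s : Finset ℕ} {u : ℕ → ℤ_[2]} {c : ℝ} (hc : 0 ≤ c)
    (h : ∀ i ∈ s, ‖u i‖ ≤ c) : ‖∑ i ∈ s, u i‖ ≤ c :=
  IsUltrametricDist.norm_sum_le_of_forall_le_of_nonneg hc h

lemma norm_lt_step {z : ℤ_[2]} {n : ℕ} (h : ‖z‖ < ((2:ℝ)^n)⁻¹) : ‖z‖ ≤ ((2:ℝ)^(n+1))⁻¹ := by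
  rw [N_eq] at h ⊢
  have := (PadicInt.norm_lt_pow_iff_norm_le_pow_sub_one z (-(n:ℤ))).mp (by exact_mod_cast h)
  convert this using 2
  push_cast; ring
  push_cast; ring

lemma norm_two' : ‖(2:ℤ_[2])‖ = (2:ℝ)⁻¹ := by
  have := PadicInt.norm_p (p := 2)
  simpa using this

lemma norm_two_pow (n : ℕ) : ‖(2:ℤ_[2])^n‖ = ((2:ℝ)^n)⁻¹ := by
  rw [norm_pow, norm_two', inv_pow]

lemma norm_two_mul (z : ℤ_[2]) : ‖2 * z‖ = (2:ℝ)⁻¹ * ‖z‖ := by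
  rw [norm_mul]
  rw [norm_two']

lemma N_succ (n : ℕ) : ((2:ℝ)^(n+1))⁻¹ = (2:ℝ)⁻¹ * ((2:ℝ)^n)⁻¹ := by
  rw [pow_succ]; ring

lemma N_le_one (n : ℕ) : ((2:ℝ)^n)⁻¹ ≤ 1 := by
  rw [inv_le_one_iff₀]; right; exact one_le_pow₀ (by norm_num)

lemma N_anti {m n : ℕ} (h : m ≤ n) : ((2:ℝ)^n)⁻¹ ≤ ((2:ℝ)^m)⁻¹ := by
  apply inv_anti₀ (by positivity)
  exact pow_le_pow_right₀ (by norm_num) h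

lemma nat_cong_iff (a b n : ℕ) :
    ‖(a:ℤ_[2]) - (b:ℤ_[2])‖ ≤ ((2:ℝ)^n)⁻¹ ↔ a ≡ b [MOD 2^n] := by
  have h1 : ((a:ℤ_[2]) - (b:ℤ_[2])) = (((a:ℤ) - (b:ℤ) : ℤ) : ℤ_[2]) := by push_cast; ring
  rw [h1, N_eq]
  have h2 := PadicInt.norm_int_le_pow_iff_dvd (p := 2) (k := (a:ℤ) - (b:ℤ)) (n := n)
  rw [show ((2:ℕ):ℝ) = (2:ℝ) by norm_num] at h2
  rw [h2, ← Int.natCast_modEq_iff, Int.modEq_iff_dvd]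
  constructor
  · intro h
    have : ((2:ℤ))^n ∣ (b:ℤ) - (a:ℤ) := dvd_sub_comm.mp (by exact_mod_cast h)
    exact_mod_cast this
  · intro h
    have : ((2:ℤ))^n ∣ (a:ℤ) - (b:ℤ) := dvd_sub_comm.mp (by exact_mod_cast h)
    exact_mod_cast this

lemma appr_close (x : ℤ_[2]) (n : ℕ) : ‖x - (x.appr n : ℤ_[2])‖ ≤ ((2:ℝ)^n)⁻¹ := by
  rw [norm_le_N_iff_dvd]
  have h := PadicInt.appr_spec n x
  rw [Ideal.mem_span_singleton] at h
  exact_mod_cast h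

lemma appr_eq_of_cong {a b : ℤ_[2]} {n : ℕ} (h : ‖a - b‖ ≤ ((2:ℝ)^n)⁻¹) :
    a.appr n = b.appr n := by
  have h2 : ‖(a.appr n : ℤ_[2]) - (b.appr n : ℤ_[2])‖ ≤ ((2:ℝ)^n)⁻¹ := by
    have e : (a.appr n : ℤ_[2]) - (b.appr n : ℤ_[2])
        = ((a.appr n : ℤ_[2]) - a) + ((a - b) + (b - (b.appr n : ℤ_[2]))) := by ring
    rw [e]
    refine umax ?_ (umax h ?_)
    · rw [norm_sub_rev]; exact appr_close a n
    · exact appr_close b n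
  have := (nat_cong_iff _ _ n).mp h2
  have la := PadicInt.appr_lt a n (p := 2)
  have lb := PadicInt.appr_lt b n (p := 2)
  unfold Nat.ModEq at this
  rwa [Nat.mod_eq_of_lt la, Nat.mod_eq_of_lt lb] at this

lemma appr_natCast {r n : ℕ} (hr : r < 2^n) : ((r : ℤ_[2])).appr n = r := by
  have h2 := (nat_cong_iff (((r:ℤ_[2])).appr n) r n).mp (by rw [norm_sub_rev]; exact appr_close _ n)
  have := PadicInt.appr_lt (r : ℤ_[2]) n (p := 2)
  unfold Nat.ModEq at h2
  rwa [Nat.mod_eq_of_lt (by exact_mod_cast this), Nat.mod_eq_of_lt hr] at h2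

lemma lip_iter {f : ℤ_[2] → ℤ_[2]} (hf : OneLip f) (k : ℕ) (a b : ℤ_[2]) :
    ‖f^[k] a - f^[k] b‖ ≤ ‖a - b‖ := by
  induction k with
  | zero => simp
  | succ k ih =>
      rw [Function.iterate_succ_apply', Function.iterate_succ_apply']
      exact (hf _ _).trans ih

/-- difference function is "Lipschitz-compatible" -/
lemma d_cong (hg : OneLip g) {a b : ℤ_[2]} {c : ℝ} (h : ‖a - b‖ ≤ c) :
    ‖(g (a+1) - g a) - (g (b+1) - g b)‖ ≤ c := by
  have e : (g (a+1) - g a) - (g (b+1) - g b) = (g (a+1) - g (b+1)) - (g a - g b) := by ring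
  rw [e]
  refine umax' ((hg _ _).trans ?_) ((hg _ _).trans h)
  have : a + 1 - (b + 1) = a - b := by ring
  rw [this]; exact h

lemma sum_orbit {f u : ℤ_[2] → ℤ_[2]} (m : ℕ)
    (hu : ∀ a b : ℤ_[2], ‖a - b‖ ≤ ((2:ℝ)^m)⁻¹ → ‖u a - u b‖ ≤ ((2:ℝ)^m)⁻¹)
    (ht : TransMod f m) (x : ℤ_[2]) :
    ‖∑ i ∈ range (2^m), u (f^[i] x) - ∑ r ∈ range (2^m), u ((r : ℤ_[2]))‖ ≤ ((2:ℝ)^m)⁻¹ := by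
  have step1 : ‖∑ i ∈ range (2^m), u (f^[i] x) -
      ∑ i ∈ range (2^m), u (((f^[i] x).appr m : ℤ_[2]))‖ ≤ ((2:ℝ)^m)⁻¹ := by
    rw [← Finset.sum_sub_distrib]
    refine usum (le_of_lt (Npos m)) fun i _ => ?_
    exact hu _ _ (appr_close _ m)
  set ψ : ℕ → ℕ := fun i => (f^[i] x).appr m with hψ
  have mem : ∀ i ∈ range (2^m), ψ i ∈ range (2^m) := by
    intro i _; simp only [Finset.mem_range]; exact PadicInt.appr_lt _ m
  have surj : ∀ r ∈ range (2^m), ∃ i ∈ range (2^m), ψ i = r := by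
    intro r hr
    rw [Finset.mem_range] at hr
    obtain ⟨i, hi, hcong⟩ := ht x (r : ℤ_[2])
    refine ⟨i, Finset.mem_range.mpr hi, ?_⟩
    have := appr_eq_of_cong (n := m) hcong
    rw [hψ]; simp only []
    rw [this, appr_natCast hr]
  have inj : ∀ a ∈ range (2^m), ∀ b ∈ range (2^m), ψ a = ψ b → a = b := by
    intro a ha b hb h
    exact Finset.inj_on_of_surj_on_of_card_le (t := range (2^m)) (fun i _ => ψ i)
      (fun i hi => mem i hi) (fun r hr => by obtain ⟨i, hi, he⟩ := surj r hr; exact ⟨i, hi, he⟩)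
      le_rfl ha hb h
  have step2 : ∑ i ∈ range (2^m), u ((ψ i : ℤ_[2])) = ∑ r ∈ range (2^m), u ((r : ℤ_[2])) := by
    refine Finset.sum_bij (fun i _ => ψ i) mem (fun a ha b hb h => inj a ha b hb h) ?_ ?_
    · intro r hr; obtain ⟨i, hi, he⟩ := surj r hr; exact ⟨i, hi, he⟩
    · intro i _; rfl
  rw [← step2]
  exact step1

lemma sum_d_small {f g : ℤ_[2] → ℤ_[2]} (hg : OneLip g) (m : ℕ) (ht : TransMod f m) (x : ℤ_[2]) :
    ‖∑ i ∈ range (2^m), (g (f^[i] x + 1) - g (f^[i] x))‖ ≤ ((2:ℝ)^m)⁻¹ := by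
  set d : ℤ_[2] → ℤ_[2] := fun z => g (z+1) - g z with hd
  have horb := sum_orbit (u := d) m (fun a b hab => d_cong hg hab) ht x
  have step3 : ∑ r ∈ range (2^m), d ((r : ℤ_[2])) = g ((2^m : ℕ) : ℤ_[2]) - g 0 := by
    have hterm : ∀ r : ℕ, d ((r : ℤ_[2])) = g (((r+1 : ℕ) : ℤ_[2])) - g ((r : ℤ_[2])) := by
      intro r; rw [hd]; push_cast; ring_nf
    calc ∑ r ∈ range (2^m), d ((r : ℤ_[2]))
        = ∑ r ∈ range (2^m), (g (((r+1:ℕ)) : ℤ_[2]) - g ((r : ℤ_[2]))) :=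
          Finset.sum_congr rfl fun r _ => hterm r
      _ = g ((2^m : ℕ) : ℤ_[2]) - g ((0:ℕ) : ℤ_[2]) := Finset.sum_range_sub (fun r => g ((r:ℕ) : ℤ_[2])) (2^m)
      _ = g ((2^m : ℕ) : ℤ_[2]) - g 0 := by norm_num
  have step4 : ‖g ((2^m : ℕ) : ℤ_[2]) - g 0‖ ≤ ((2:ℝ)^m)⁻¹ := by
    refine (hg _ _).trans ?_
    rw [sub_zero]
    push_cast
    rw [norm_two_pow]
  have e : ∑ i ∈ range (2^m), d (f^[i] x)
      = (∑ i ∈ range (2^m), d (f^[i] x) - ∑ r ∈ range (2^m), d ((r:ℤ_[2])))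
        + ∑ r ∈ range (2^m), d ((r:ℤ_[2])) := by ring
  show ‖∑ i ∈ range (2^m), d (f^[i] x)‖ ≤ ((2:ℝ)^m)⁻¹
  rw [e]
  exact umax horb (by rw [step3]; exact step4)

lemma tele_key {f h : ℤ_[2] → ℤ_[2]} (hh : ∀ x : ℤ_[2], f x = 1 + x + 2 * h x)
    (m : ℕ) (x : ℤ_[2]) :
    f^[2^m] x - (x + 2^m) = 2 * ∑ i ∈ range (2^m), h (f^[i] x) := by
  have hterm : ∀ i : ℕ, f^[i+1] x - f^[i] x = 1 + 2*(h (f^[i] x)) := by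
    intro i
    rw [Function.iterate_succ_apply', hh (f^[i] x)]
    ring
  have tele : ∑ i ∈ range (2^m), (f^[i+1] x - f^[i] x) = f^[2^m] x - x := by
    have := Finset.sum_range_sub (fun i => f^[i] x) (2^m)
    simpa using this
  have e1 : ∑ i ∈ range (2^m), (f^[i+1] x - f^[i] x)
      = ∑ i ∈ range (2^m), ((1:ℤ_[2]) + 2*(h (f^[i] x))) :=
    Finset.sum_congr rfl fun i _ => hterm i
  rw [e1] at tele
  rw [Finset.sum_add_distrib, Finset.sum_const, Finset.card_range] at tele
  have e2 : (2^m) • (1:ℤ_[2]) = (2:ℤ_[2])^m := by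
    rw [nsmul_eq_mul, mul_one]; push_cast; ring
  rw [e2] at tele
  have e3 : ∑ i ∈ range (2^m), (2:ℤ_[2])*(h (f^[i] x))
      = 2 * ∑ i ∈ range (2^m), h (f^[i] x) := by
    rw [Finset.mul_sum]
  rw [e3] at tele
  linear_combination -tele

lemma iter_step {f g : ℤ_[2] → ℤ_[2]} (hg : OneLip g)
    (hfm : ∀ x : ℤ_[2], f x = 1 + x + 2 * (g (x + 1) - g x)) (m : ℕ) (ht : TransMod f m) (x : ℤ_[2]) :
    ‖f^[2^m] x - (x + 2^m)‖ ≤ ((2:ℝ)^(m+1))⁻¹ := by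
  rw [tele_key hfm m x, norm_two_mul, N_succ]
  exact mul_le_mul_of_nonneg_left (sum_d_small hg m ht x) (by norm_num)

lemma trans_back {f g : ℤ_[2] → ℤ_[2]} (hg : OneLip g)
    (hfm : ∀ x : ℤ_[2], f x = 1 + x + 2 * (g (x + 1) - g x)) : ∀ n : ℕ, TransMod f n := by
  intro n
  induction n with
  | zero =>
      intro x y
      refine ⟨0, by norm_num, ?_⟩
      show ‖f^[0] x - y‖ ≤ ((2:ℝ)^0)⁻¹
      simpa using PadicInt.norm_le_one _
  | succ n ih =>
      intro x y
      obtain ⟨i, hi, hc⟩ := ih x y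
      have hc' : ‖f^[i] x - y‖ ≤ ((2:ℝ)^n)⁻¹ := hc
      rcases dichot _ n hc' with h1 | h2
      · exact ⟨i, lt_of_lt_of_le hi (Nat.pow_le_pow_right (by norm_num) (Nat.le_succ n)), h1⟩
      · refine ⟨2^n + i, ?_, ?_⟩
        · have : (2:ℕ)^(n+1) = 2^n + 2^n := by ring
          omega
        · show ‖f^[2^n + i] x - y‖ ≤ ((2:ℝ)^(n+1))⁻¹
          rw [Function.iterate_add_apply]
          set z := f^[i] x with hz
          have hstep := iter_step hg hfm n ih z
          have e : f^[2^n] z - y = (f^[2^n] z - (z + 2^n)) + ((z - y - 2^n) + 2^(n+1)) := by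
            ring
          rw [e]
          refine umax hstep (umax h2 ?_)
          rw [norm_two_pow]


/-! ### Forward direction -/

lemma surj_mod {f : ℤ_[2] → ℤ_[2]} {n : ℕ} (ht : TransMod f n) (y : ℤ_[2]) :
    ∃ x : ℤ_[2], ‖f x - y‖ ≤ ((2:ℝ)^n)⁻¹ := by
  obtain ⟨i, _, hc⟩ := ht (f y) y
  refine ⟨f^[i] y, ?_⟩
  have : f (f^[i] y) = f^[i] (f y) := by
    rw [← Function.iterate_succ_apply, Function.iterate_succ_apply']
  rw [this]
  exact hc

lemma inj_mod {f : ℤ_[2] → ℤ_[2]} (hf : OneLip f) {n : ℕ} (ht : TransMod f n)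
    {a b : ℤ_[2]} (hab : ‖f a - f b‖ ≤ ((2:ℝ)^n)⁻¹) : ‖a - b‖ ≤ ((2:ℝ)^n)⁻¹ := by
  set Φ : ℕ → ℕ := fun r => (f ((r : ℤ_[2]))).appr n with hΦ
  have mem : ∀ r ∈ range (2^n), Φ r ∈ range (2^n) := fun r _ =>
    Finset.mem_range.mpr (PadicInt.appr_lt _ n)
  have surj : ∀ s ∈ range (2^n), ∃ r ∈ range (2^n), Φ r = s := by
    intro s hs
    rw [Finset.mem_range] at hs
    obtain ⟨x, hx⟩ := surj_mod ht ((s:ℕ) : ℤ_[2])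
    refine ⟨x.appr n, Finset.mem_range.mpr (PadicInt.appr_lt _ n), ?_⟩
    have h1 : ‖f ((x.appr n : ℤ_[2])) - ((s:ℕ) : ℤ_[2])‖ ≤ ((2:ℝ)^n)⁻¹ := by
      have e : f ((x.appr n : ℤ_[2])) - ((s:ℕ):ℤ_[2])
          = (f ((x.appr n : ℤ_[2])) - f x) + (f x - ((s:ℕ):ℤ_[2])) := by ring
      rw [e]
      refine umax ((hf _ _).trans ?_) hx
      rw [norm_sub_rev]; exact appr_close x n
    rw [hΦ]; simp only []
    rw [appr_eq_of_cong h1, appr_natCast hs]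
  have inj : ∀ r ∈ range (2^n), ∀ r' ∈ range (2^n), Φ r = Φ r' → r = r' := by
    intro r hr r' hr' h
    exact Finset.inj_on_of_surj_on_of_card_le (t := range (2^n)) (fun i _ => Φ i)
      (fun i hi => mem i hi) (fun s hs => by obtain ⟨i, hi, he⟩ := surj s hs; exact ⟨i, hi, he⟩)
      le_rfl hr hr' h
  -- now conclude
  have e1 : Φ (a.appr n) = (f a).appr n := by
    rw [hΦ]; simp only []
    refine appr_eq_of_cong ?_
    refine (hf _ _).trans ?_
    rw [norm_sub_rev]; exact appr_close a n
  have e2 : Φ (b.appr n) = (f b).appr n := by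
    rw [hΦ]; simp only []
    refine appr_eq_of_cong ?_
    refine (hf _ _).trans ?_
    rw [norm_sub_rev]; exact appr_close b n
  have eq : a.appr n = b.appr n := by
    refine inj _ (Finset.mem_range.mpr (PadicInt.appr_lt _ n)) _
      (Finset.mem_range.mpr (PadicInt.appr_lt _ n)) ?_
    rw [e1, e2, appr_eq_of_cong hab]
  have : a - b = (a - (a.appr n : ℤ_[2])) + (((b.appr n : ℕ) : ℤ_[2]) - b) := by
    rw [← eq]; ring
  rw [this]
  refine umax (appr_close a n) ?_
  rw [norm_sub_rev]; exact appr_close b n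

lemma iso_step {f : ℤ_[2] → ℤ_[2]} (hf : OneLip f) {n : ℕ} (ht1 : TransMod f (n+1))
    {a b : ℤ_[2]} (hab : ‖a - b‖ ≤ ((2:ℝ)^n)⁻¹) :
    ‖(f a - f b) - (a - b)‖ ≤ ((2:ℝ)^(n+1))⁻¹ := by
  rcases dichot (a - b) n hab with h1 | h2
  · exact umax' ((hf a b).trans h1) h1
  · have hfn : ‖f a - f b‖ ≤ ((2:ℝ)^n)⁻¹ := (hf a b).trans hab
    rcases dichot (f a - f b) n hfn with h3 | h4
    · exfalso
      have hinj := inj_mod hf ht1 h3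
      have : (2:ℤ_[2])^n = (a - b) - ((a - b) - 2^n) := by ring
      have hcontra : ‖(2:ℤ_[2])^n‖ ≤ ((2:ℝ)^(n+1))⁻¹ := by
        rw [this]; exact umax' hinj h2
      rw [norm_two_pow] at hcontra
      have := N_succ n
      nlinarith [Npos n]
    · have e : (f a - f b) - (a - b) = ((f a - f b) - 2^n) - ((a - b) - 2^n) := by ring
      rw [e]; exact umax' h4 h2

lemma h_lip {f h : ℤ_[2] → ℤ_[2]} (hf : OneLip f) (hT : ∀ k : ℕ, TransMod f k)
    (hh : ∀ x : ℤ_[2], f x = 1 + x + 2 * h x) {n : ℕ} {a b : ℤ_[2]}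
    (hab : ‖a - b‖ ≤ ((2:ℝ)^n)⁻¹) : ‖h a - h b‖ ≤ ((2:ℝ)^n)⁻¹ := by
  have key : (2:ℤ_[2]) * (h a - h b) = (f a - f b) - (a - b) := by
    have ea := hh a; have eb := hh b
    linear_combination eb - ea
  have := iso_step hf (hT (n+1)) hab
  rw [← key, norm_two_mul, N_succ] at this
  nlinarith [norm_nonneg (h a - h b)]

lemma norm_ex (z : ℤ_[2]) (hz : z ≠ 0) : ∃ n : ℕ, ‖z‖ = ((2:ℝ)^n)⁻¹ := by
  refine ⟨z.valuation, ?_⟩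
  rw [PadicInt.norm_eq_zpow_neg_valuation hz, N_eq]
  norm_num

lemma h_onelip {f h : ℤ_[2] → ℤ_[2]} (hf : OneLip f) (hT : ∀ k : ℕ, TransMod f k)
    (hh : ∀ x : ℤ_[2], f x = 1 + x + 2 * h x) : OneLip h := by
  intro a b
  rcases eq_or_ne a b with rfl | hne
  · simp
  · have hz : a - b ≠ 0 := sub_ne_zero_of_ne hne
    obtain ⟨n, hn⟩ := norm_ex _ hz
    rw [hn]
    exact h_lip hf hT hh (le_of_eq hn)

lemma cancel_iter {f : ℤ_[2] → ℤ_[2]} (hf : OneLip f) {n : ℕ} (ht : TransMod f n)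
    (k : ℕ) {a b : ℤ_[2]} (hab : ‖f^[k] a - f^[k] b‖ ≤ ((2:ℝ)^n)⁻¹) :
    ‖a - b‖ ≤ ((2:ℝ)^n)⁻¹ := by
  induction k with
  | zero => simpa using hab
  | succ k ih =>
      apply ih
      rw [Function.iterate_succ_apply', Function.iterate_succ_apply'] at hab
      exact inj_mod hf ht hab

lemma period_ge {f : ℤ_[2] → ℤ_[2]} (hf : OneLip f) {n : ℕ} (ht : TransMod f n)
    {t : ℕ} (htpos : 0 < t) (hper : ‖f^[t] 0 - 0‖ ≤ ((2:ℝ)^n)⁻¹) : 2^n ≤ t := by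
  set ψ : ℕ → ℕ := fun i => (f^[i] (0:ℤ_[2])).appr n with hψ
  have hshift : ∀ i : ℕ, ψ (i + t) = ψ i := by
    intro i
    apply appr_eq_of_cong
    have e : f^[i + t] (0:ℤ_[2]) = f^[i] (f^[t] 0) := Function.iterate_add_apply f i t 0
    rw [e]
    exact (lip_iter hf i _ _).trans hper
  have hmod : ∀ i : ℕ, ψ i = ψ (i % t) := by
    intro i
    induction i using Nat.strong_induction_on with
    | _ i ih =>
        by_cases hlt : i < t
        · rw [Nat.mod_eq_of_lt hlt]
        · push_neg at hlt
          have e : i = (i - t) + t := by omega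
          calc ψ i = ψ ((i - t) + t) := by rw [← e]
            _ = ψ (i - t) := hshift _
            _ = ψ ((i - t) % t) := ih (i - t) (by omega)
            _ = ψ (i % t) := by rw [← Nat.mod_eq_sub_mod hlt]
  have hsub : range (2^n) ⊆ Finset.image ψ (range t) := by
    intro s hs
    rw [Finset.mem_range] at hs
    obtain ⟨i, _, hc⟩ := ht 0 ((s:ℕ) : ℤ_[2])
    have : ψ i = s := by
      rw [hψ]; simp only []
      rw [appr_eq_of_cong hc, appr_natCast hs]
    rw [Finset.mem_image]
    exact ⟨i % t, Finset.mem_range.mpr (Nat.mod_lt _ htpos), by rw [← hmod i, this]⟩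
  calc 2^n = (range (2^n)).card := (Finset.card_range _).symm
    _ ≤ (Finset.image ψ (range t)).card := Finset.card_le_card hsub
    _ ≤ (range t).card := Finset.card_image_le
    _ = t := Finset.card_range t

lemma orbit0 {f : ℤ_[2] → ℤ_[2]} (hf : OneLip f) {n : ℕ} (ht : TransMod f n) :
    ‖f^[2^n] (0:ℤ_[2]) - 0‖ ≤ ((2:ℝ)^n)⁻¹ := by
  obtain ⟨i, hi, hc⟩ := ht 0 (f^[2^n] (0:ℤ_[2]))
  have hc' : ‖f^[i] (0:ℤ_[2]) - f^[2^n] 0‖ ≤ ((2:ℝ)^n)⁻¹ := hc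
  have e : f^[2^n] (0:ℤ_[2]) = f^[i] (f^[2^n - i] 0) := by
    rw [← Function.iterate_add_apply]
    congr 1
    omega
  rw [e] at hc'
  have hcan := cancel_iter hf ht i hc'
  rw [norm_sub_rev, sub_zero] at hcan
  have hge := period_ge hf ht (t := 2^n - i) (by omega) (by rwa [sub_zero])
  have hi0 : i = 0 := by omega
  subst hi0
  simp only [Nat.sub_zero] at hcan
  rwa [sub_zero]

lemma orbit1 {f : ℤ_[2] → ℤ_[2]} (hf : OneLip f) {n : ℕ}
    (ht : TransMod f n) (ht1 : TransMod f (n+1)) :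
    ‖f^[2^n] (0:ℤ_[2]) - 2^n‖ ≤ ((2:ℝ)^(n+1))⁻¹ := by
  have h0 := orbit0 hf ht
  rcases dichot _ n h0 with h1 | h2
  · exfalso
    have := period_ge hf ht1 (t := 2^n) (by positivity) h1
    have hlt : (2:ℕ)^n < 2^(n+1) := Nat.pow_lt_pow_succ (by norm_num)
    omega
  · rwa [sub_zero] at h2

lemma sum_zero {f h : ℤ_[2] → ℤ_[2]} (hf : OneLip f) (hT : ∀ k : ℕ, TransMod f k)
    (hh : ∀ x : ℤ_[2], f x = 1 + x + 2 * h x) (n : ℕ) :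
    ‖∑ i ∈ range (2^n), h (f^[i] (0:ℤ_[2]))‖ ≤ ((2:ℝ)^n)⁻¹ := by
  have key := tele_key hh n (0:ℤ_[2])
  rw [zero_add] at key
  have horb := orbit1 hf (hT n) (hT (n+1))
  rw [key, norm_two_mul, N_succ] at horb
  nlinarith [norm_nonneg (∑ i ∈ range (2^n), h (f^[i] (0:ℤ_[2])))]

lemma sum_resid {f h : ℤ_[2] → ℤ_[2]} (hf : OneLip f) (hT : ∀ k : ℕ, TransMod f k)
    (hh : ∀ x : ℤ_[2], f x = 1 + x + 2 * h x) (n : ℕ) :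
    ‖∑ r ∈ range (2^n), h ((r : ℤ_[2]))‖ ≤ ((2:ℝ)^n)⁻¹ := by
  have horb := sum_orbit (u := h) n (fun a b hab => h_lip hf hT hh hab) (hT n) 0
  have e : ∑ r ∈ range (2^n), h ((r:ℤ_[2]))
      = ∑ i ∈ range (2^n), h (f^[i] (0:ℤ_[2]))
        - (∑ i ∈ range (2^n), h (f^[i] (0:ℤ_[2])) - ∑ r ∈ range (2^n), h ((r:ℤ_[2]))) := by ring
  rw [e]
  exact umax' (sum_zero hf hT hh n) horb

lemma window_zero {f h : ℤ_[2] → ℤ_[2]} (hf : OneLip f) (hT : ∀ k : ℕ, TransMod f k)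
    (hh : ∀ x : ℤ_[2], f x = 1 + x + 2 * h x) (m n : ℕ) :
    ‖∑ j ∈ range (2^n), h (((m + j : ℕ) : ℤ_[2]))‖ ≤ ((2:ℝ)^n)⁻¹ := by
  -- compare with residues
  have step1 : ‖∑ j ∈ range (2^n), h (((m + j : ℕ) : ℤ_[2]))
      - ∑ j ∈ range (2^n), h ((((m + j) % 2^n : ℕ) : ℤ_[2]))‖ ≤ ((2:ℝ)^n)⁻¹ := by
    rw [← Finset.sum_sub_distrib]
    refine usum (le_of_lt (Npos n)) fun j _ => ?_
    refine h_lip hf hT hh ?_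
    rw [nat_cong_iff]
    exact (Nat.mod_modEq (m+j) (2^n)).symm
  set ψ : ℕ → ℕ := fun j => (m + j) % 2^n with hψ
  have mem : ∀ j ∈ range (2^n), ψ j ∈ range (2^n) := fun j _ =>
    Finset.mem_range.mpr (Nat.mod_lt _ (by positivity))
  have inj : ∀ a ∈ range (2^n), ∀ b ∈ range (2^n), ψ a = ψ b → a = b := by
    intro a ha b hb hab
    rw [Finset.mem_range] at ha hb
    have h1 : (m + a) % 2^n = (m + b) % 2^n := hab
    have h2 : a % 2^n = b % 2^n := Nat.ModEq.add_left_cancel' m h1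
    rwa [Nat.mod_eq_of_lt ha, Nat.mod_eq_of_lt hb] at h2
  have surj : ∀ s ∈ range (2^n), ∃ j ∈ range (2^n), ψ j = s := by
    intro s hs
    obtain ⟨j, hj, he⟩ := Finset.surj_on_of_inj_on_of_card_le (t := range (2^n))
      (fun j _ => ψ j) (fun j hj => mem j hj) (fun a b ha hb hab => inj a ha b hb hab)
      le_rfl s hs
    exact ⟨j, hj, he.symm⟩
  have step2 : ∑ j ∈ range (2^n), h ((ψ j : ℤ_[2])) = ∑ r ∈ range (2^n), h ((r : ℤ_[2])) := by
    refine Finset.sum_bij (fun j _ => ψ j) mem (fun a ha b hb hab => inj a ha b hb hab) ?_ ?_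
    · intro r hr; obtain ⟨j, hj, he⟩ := surj r hr; exact ⟨j, hj, he⟩
    · intro j _; rfl
  have e : ∑ j ∈ range (2^n), h (((m + j : ℕ) : ℤ_[2]))
      = (∑ j ∈ range (2^n), h (((m + j : ℕ) : ℤ_[2]))
          - ∑ j ∈ range (2^n), h ((ψ j : ℤ_[2])))
        + ∑ j ∈ range (2^n), h ((ψ j : ℤ_[2])) := by ring
  rw [e]
  refine umax step1 ?_
  rw [step2]
  exact sum_resid hf hT hh n

section Gdef
variable (h : ℤ_[2] → ℤ_[2])

noncomputable def Gfun : ℕ → ℤ_[2] := fun m => ∑ k ∈ range m, h ((k : ℤ_[2]))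

lemma Gfun_add (a s : ℕ) :
    Gfun h (a + s) - Gfun h a = ∑ j ∈ range s, h (((a + j : ℕ) : ℤ_[2])) := by
  induction s with
  | zero => simp [Gfun]
  | succ s ih =>
      rw [show a + (s+1) = (a+s)+1 by ring, Gfun, Finset.sum_range_succ, ← Gfun,
        Finset.sum_range_succ, ← ih]
      ring

end Gdef

lemma Gfun_mod {f h : ℤ_[2] → ℤ_[2]} (hf : OneLip f) (hT : ∀ k : ℕ, TransMod f k)
    (hh : ∀ x : ℤ_[2], f x = 1 + x + 2 * h x) {n a b : ℕ} (hab : a ≡ b [MOD 2^n]) :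
    ‖Gfun h a - Gfun h b‖ ≤ ((2:ℝ)^n)⁻¹ := by
  -- reduce to the case a ≤ b
  wlog hle : a ≤ b generalizing a b
  · rw [norm_sub_rev]; exact this hab.symm (by omega)
  obtain ⟨q, hq⟩ : ∃ q, b = a + 2^n * q := by
    have hd := (Nat.modEq_iff_dvd' hle).mp hab
    obtain ⟨q, hq⟩ := hd
    exact ⟨q, by omega⟩
  subst hq
  clear hab hle
  rw [norm_sub_rev]
  induction q with
  | zero => simp [le_of_lt (Npos n)]
  | succ q ih =>
      have e : Gfun h (a + 2^n * (q+1)) - Gfun h a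
          = (Gfun h ((a + 2^n*q) + 2^n) - Gfun h (a + 2^n*q)) + (Gfun h (a + 2^n*q) - Gfun h a) := by
        have : a + 2^n * (q+1) = (a + 2^n*q) + 2^n := by ring
        rw [this]; ring
      rw [e]
      refine umax ?_ ?_
      · rw [Gfun_add]
        exact window_zero hf hT hh _ n
      · rw [norm_sub_rev] at ih ⊢
        exact ih

lemma tendsto_N : Filter.Tendsto (fun m : ℕ => ((2:ℝ)^m)⁻¹) Filter.atTop (nhds 0) := by
  have : (fun m : ℕ => ((2:ℝ)^m)⁻¹) = fun m : ℕ => ((2:ℝ)⁻¹)^m := by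
    funext m; rw [inv_pow]
  rw [this]
  exact tendsto_pow_atTop_nhds_zero_of_lt_one (by norm_num) (by norm_num)

lemma appr_modeq (x : ℤ_[2]) {n m : ℕ} (hnm : n ≤ m) : x.appr m ≡ x.appr n [MOD 2^n] := by
  rw [← nat_cong_iff]
  have e : ((x.appr m : ℤ_[2])) - (x.appr n : ℤ_[2])
      = ((x.appr m : ℤ_[2]) - x) + (x - (x.appr n : ℤ_[2])) := by ring
  rw [e]
  refine umax ?_ (appr_close x n)
  rw [norm_sub_rev]
  exact (appr_close x m).trans (N_anti hnm)

lemma Gfun_cauchy {f h : ℤ_[2] → ℤ_[2]} (hf : OneLip f) (hT : ∀ k : ℕ, TransMod f k)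
    (hh : ∀ x : ℤ_[2], f x = 1 + x + 2 * h x) (x : ℤ_[2]) :
    CauchySeq (fun m : ℕ => Gfun h (x.appr m)) := by
  rw [Metric.cauchySeq_iff']
  intro ε hε
  obtain ⟨k, hk⟩ := PadicInt.exists_pow_neg_lt 2 hε
  refine ⟨k, fun n hn => ?_⟩
  rw [dist_eq_norm]
  have hb : ‖Gfun h (x.appr n) - Gfun h (x.appr k)‖ ≤ ((2:ℝ)^k)⁻¹ :=
    Gfun_mod hf hT hh (appr_modeq x hn)
  refine lt_of_le_of_lt hb ?_
  rw [N_eq]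
  exact_mod_cast hk

open Filter Topology in
theorem transitive_explicit_form_aux (f : ℤ_[2] → ℤ_[2]) (hf : OneLip f) :
    TransitiveT f ↔
      ∃ g : ℤ_[2] → ℤ_[2], OneLip g ∧
        ∀ x : ℤ_[2], f x = 1 + x + 2 * (g (x + 1) - g x) := by
  constructor
  · intro htrans
    have hT : ∀ k : ℕ, TransMod f k := by
      intro k
      cases k with
      | zero =>
          intro x y
          refine ⟨0, by norm_num, ?_⟩
          show ‖f^[0] x - y‖ ≤ ((2:ℝ)^0)⁻¹
          simpa using PadicInt.norm_le_one _
      | succ k => exact htrans (k+1) (by omega)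
    have hexh : ∀ x : ℤ_[2], ∃ w, f x = 1 + x + 2*w := by
      intro x
      obtain ⟨i, hi, hc⟩ := hT 1 x (x + 1)
      interval_cases i
      · exfalso
        have h1 : ‖f^[0] x - (x+1)‖ ≤ ((2:ℝ)^1)⁻¹ := hc
        have e : f^[0] x - (x+1) = -1 := by simp
        rw [e] at h1
        simp at h1
        norm_num at h1
      · have h1 : ‖f^[1] x - (x+1)‖ ≤ ((2:ℝ)^1)⁻¹ := hc
        rw [Function.iterate_one, norm_le_N_iff_dvd] at h1
        obtain ⟨w, hw⟩ := h1
        exact ⟨w, by rw [pow_one] at hw; linear_combination hw⟩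
    choose hfun hhfun using hexh
    have hcau := fun x => Gfun_cauchy hf hT hhfun x
    have hex : ∀ x : ℤ_[2], ∃ l, Tendsto (fun m => Gfun hfun (x.appr m)) atTop (𝓝 l) :=
      fun x => cauchySeq_tendsto_of_complete (hcau x)
    choose g hg using hex
    have hdiff : ∀ x : ℤ_[2], g (x+1) - g x = hfun x := by
      intro x
      have key : ∀ m : ℕ, ‖(Gfun hfun ((x+1).appr m) - Gfun hfun (x.appr m)) - hfun x‖
          ≤ ((2:ℝ)^m)⁻¹ := by
        intro m
        have e1 : (x+1).appr m ≡ x.appr m + 1 [MOD 2^m] := by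
          rw [← nat_cong_iff]
          have e : (((x+1).appr m : ℤ_[2])) - ((x.appr m + 1 : ℕ) : ℤ_[2])
              = (((x+1).appr m : ℤ_[2]) - (x+1)) + (x - (x.appr m : ℤ_[2])) := by
            push_cast; ring
          rw [e]
          exact umax (by rw [norm_sub_rev]; exact appr_close _ m) (appr_close _ m)
        have e2 : Gfun hfun (x.appr m + 1) = Gfun hfun (x.appr m) + hfun ((x.appr m : ℤ_[2])) :=
          Finset.sum_range_succ _ _
        have e3 : ‖hfun ((x.appr m:ℤ_[2])) - hfun x‖ ≤ ((2:ℝ)^m)⁻¹ :=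
          h_lip hf hT hhfun (by rw [norm_sub_rev]; exact appr_close x m)
        have e4 : ‖Gfun hfun ((x+1).appr m) - Gfun hfun (x.appr m + 1)‖ ≤ ((2:ℝ)^m)⁻¹ :=
          Gfun_mod hf hT hhfun e1
        have e5 : (Gfun hfun ((x+1).appr m) - Gfun hfun (x.appr m)) - hfun x
            = (Gfun hfun ((x+1).appr m) - Gfun hfun (x.appr m + 1))
              + (hfun ((x.appr m:ℤ_[2])) - hfun x) := by
          rw [e2]; ring
        rw [e5]; exact umax e4 e3
      have t1 : Tendsto (fun m => Gfun hfun ((x+1).appr m) - Gfun hfun (x.appr m)) atTop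
          (𝓝 (g (x+1) - g x)) := (hg (x+1)).sub (hg x)
      have t2 : Tendsto (fun m => Gfun hfun ((x+1).appr m) - Gfun hfun (x.appr m)) atTop
          (𝓝 (hfun x)) := by
        have t0 : Tendsto (fun m => (Gfun hfun ((x+1).appr m) - Gfun hfun (x.appr m)) - hfun x)
            atTop (𝓝 0) := squeeze_zero_norm key tendsto_N
        have := t0.add_const (hfun x)
        simpa using this
      exact tendsto_nhds_unique t1 t2
    refine ⟨g, ?_, ?_⟩
    · intro a b
      rcases eq_or_ne a b with rfl | hne
      · simp
      obtain ⟨n, hn⟩ := norm_ex _ (sub_ne_zero_of_ne hne)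
      rw [hn]
      have bound : ∀ m, n ≤ m →
          ‖Gfun hfun (a.appr m) - Gfun hfun (b.appr m)‖ ≤ ((2:ℝ)^n)⁻¹ := by
        intro m hm
        refine Gfun_mod hf hT hhfun ?_
        rw [← nat_cong_iff]
        have e : ((a.appr m : ℤ_[2])) - (b.appr m : ℤ_[2])
            = ((a.appr m:ℤ_[2]) - a) + ((a - b) + (b - (b.appr m:ℤ_[2]))) := by ring
        rw [e]
        refine umax (by rw [norm_sub_rev]; exact (appr_close a m).trans (N_anti hm))
          (umax (le_of_eq hn) ((appr_close b m).trans (N_anti hm)))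
      have t1 : Tendsto (fun m => ‖Gfun hfun (a.appr m) - Gfun hfun (b.appr m)‖) atTop
          (𝓝 ‖g a - g b‖) := ((hg a).sub (hg b)).norm
      exact le_of_tendsto t1 (Filter.eventually_atTop.mpr ⟨n, bound⟩)
    · intro x
      rw [hdiff x]
      exact hhfun x
  · rintro ⟨g, hg, hfm⟩
    intro n _
    exact trans_back hg hfm n

/-- Explicit form of transitive T-functions: `f(x) = 1 + x + 2 (g(x+1) - g(x))`. -/
theorem transitive_explicit_form (f : ℤ_[2] → ℤ_[2]) (hf : OneLip f) :
    TransitiveT f ↔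
      ∃ g : ℤ_[2] → ℤ_[2], OneLip g ∧
        ∀ x : ℤ_[2], f x = 1 + x + 2 * (g (x + 1) - g x) :=
  transitive_explicit_form_aux f hf
end
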